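/- Let n be a positive integer, let U be an (n+1)×(n+1) complex matrix that is unitary (U* U = I) and symmetric (Uᵗ = U), written in block form U = [[A, B], [C, D]] with A ∈ ℂ (a 1×1 block), B a 1×n row, C an n×1 column, and D an n×n block. For z = (z₁, …, zₙ) ∈ 𝔻ⁿ let E_z denote the n×n diagonal matrix with diagonal entries z₁, …, zₙ, and define f(z) = A + B E_z (I − D E_z)^{-1} C. Then f is a well-defined holomorphic function on 𝔻ⁿ with values in the closed unit disk, and for every z ∈ 𝔻ⁿ one has ∑_{i=1}^{n} (1 − |z_i|²) |∂f/∂z_i (z)| = 1 − |f(z)|². -/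

import Mathlib

open Matrix

/-- The open unit polydisk in `ℂⁿ`. -/
def polydisk (n : ℕ) : Set (Fin n → ℂ) := {z | ∀ i, ‖z i‖ < 1}

/-- The `(n+1) × (n+1)` block matrix `[[A, B], [C, D]]` with scalar upper-left corner `A`,
row `B`, column `C` and `n × n` block `D`. -/
def blockU {n : ℕ} (A : ℂ) (B C : Fin n → ℂ) (D : Matrix (Fin n) (Fin n) ℂ) :
    Matrix (Fin 1 ⊕ Fin n) (Fin 1 ⊕ Fin n) ℂ :=
  Matrix.fromBlocks (Matrix.of fun _ _ => A) (Matrix.of fun _ j => B j)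
    (Matrix.of fun i _ => C i) D

/-- The transfer function `f(z) = A + B E_z (I - D E_z)⁻¹ C`, where `E_z` is the diagonal
matrix with diagonal entries `z₁, …, zₙ`. -/
noncomputable def transfer {n : ℕ} (A : ℂ) (B C : Fin n → ℂ)
    (D : Matrix (Fin n) (Fin n) ℂ) (z : Fin n → ℂ) : ℂ :=
  A + B ⬝ᵥ ((Matrix.diagonal z * (1 - D * Matrix.diagonal z)⁻¹).mulVec C)

section
variable {n : ℕ} {A : ℂ} {B C : Fin n → ℂ} {D : Matrix (Fin n) (Fin n) ℂ}

lemma dot_star_self {m : Type*} [Fintype m] (y : m → ℂ) :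
    star y ⬝ᵥ y = ((∑ j, ‖y j‖ ^ 2 : ℝ) : ℂ) := by
  push_cast
  simp only [dotProduct, Pi.star_apply]
  refine Finset.sum_congr rfl fun j _ => ?_
  rw [show (star (y j)) = (starRingEnd ℂ) (y j) from rfl, mul_comm, Complex.mul_conj,
    Complex.normSq_eq_norm_sq]
  push_cast; ring

lemma iso_real (hU : (blockU A B C D)ᴴ * blockU A B C D = 1) (x : Fin 1 ⊕ Fin n → ℂ) :
    ∑ j, ‖(blockU A B C D *ᵥ x) j‖ ^ 2 = ∑ j, ‖x j‖ ^ 2 := by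
  have h : star (blockU A B C D *ᵥ x) ⬝ᵥ (blockU A B C D *ᵥ x) = star x ⬝ᵥ x := by
    rw [star_mulVec, dotProduct_mulVec, vecMul_vecMul, hU, vecMul_one]
  rw [dot_star_self, dot_star_self] at h
  exact_mod_cast h

end

section two
variable {n : ℕ} {A : ℂ} {B C : Fin n → ℂ} {D : Matrix (Fin n) (Fin n) ℂ}

lemma blockU_mulVec (p : ℂ) (q : Fin n → ℂ) :
    blockU A B C D *ᵥ Sum.elim (fun _ => p) q =
      Sum.elim (fun _ => A * p + B ⬝ᵥ q) (fun i => C i * p + (D *ᵥ q) i) := by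
  rw [blockU, fromBlocks_mulVec]
  funext j
  cases j <;> simp [mulVec, dotProduct]

lemma D_contract' (hU : (blockU A B C D)ᴴ * blockU A B C D = 1) (w : Fin n → ℂ) :
    ∑ i, ‖(D *ᵥ w) i‖ ^ 2 ≤ ∑ i, ‖w i‖ ^ 2 := by
  have h := iso_real hU (Sum.elim (fun _ => (0:ℂ)) w)
  rw [blockU_mulVec] at h
  simp only [Fintype.sum_sum_type, Sum.elim_inl, Sum.elim_inr, Finset.sum_const,
    Finset.card_univ, Fintype.card_fin, one_smul, mul_zero, zero_add, norm_zero] at h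
  nlinarith [sq_nonneg ‖B ⬝ᵥ w‖, norm_nonneg (B ⬝ᵥ w)]

lemma sq_norm_lt_one {z : Fin n → ℂ} (hz : z ∈ polydisk n) (i : Fin n) : ‖z i‖ ^ 2 < 1 := by
  have h1 : ‖z i‖ < 1 := hz i
  nlinarith [norm_nonneg (z i)]

lemma isUnit_one_sub (hU : (blockU A B C D)ᴴ * blockU A B C D = 1)
    {z : Fin n → ℂ} (hz : z ∈ polydisk n) : IsUnit (1 - D * Matrix.diagonal z) := by
  rw [Matrix.isUnit_iff_isUnit_det, isUnit_iff_ne_zero]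
  intro hdet
  obtain ⟨v, hv, hMv⟩ := (Matrix.exists_mulVec_eq_zero_iff.2 hdet)
  rw [sub_mulVec, one_mulVec, sub_eq_zero] at hMv
  set w : Fin n → ℂ := fun i => z i * v i with hw
  have hdw : Matrix.diagonal z *ᵥ v = w := funext fun i => mulVec_diagonal z v i
  have hveq : v = D *ᵥ w := by rw [hMv, ← mulVec_mulVec, hdw]
  have h1 := D_contract' hU w
  rw [← hveq] at h1
  obtain ⟨i0, hi0⟩ := Function.ne_iff.1 hv
  have hi0' : v i0 ≠ 0 := hi0
  have h2 : ∑ i, ‖w i‖ ^ 2 < ∑ i, ‖v i‖ ^ 2 := by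
    refine Finset.sum_lt_sum (fun i _ => ?_) ⟨i0, Finset.mem_univ i0, ?_⟩
    · show ‖z i * v i‖ ^ 2 ≤ ‖v i‖ ^ 2
      rw [norm_mul, mul_pow]
      nlinarith [sq_norm_lt_one hz i, sq_nonneg (‖v i‖)]
    · show ‖z i0 * v i0‖ ^ 2 < ‖v i0‖ ^ 2
      rw [norm_mul, mul_pow]
      have hvi : 0 < ‖v i0‖ ^ 2 := by
        have : 0 < ‖v i0‖ := norm_pos_iff.2 hi0'
        positivity
      nlinarith [sq_norm_lt_one hz i0]
  linarith

end two

section three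
variable {n : ℕ} {A : ℂ} {B C : Fin n → ℂ} {D : Matrix (Fin n) (Fin n) ℂ}

lemma main_identity (hU : (blockU A B C D)ᴴ * blockU A B C D = 1)
    {z : Fin n → ℂ} (hz : z ∈ polydisk n) :
    ‖transfer A B C D z‖ ^ 2 + ∑ i, ‖((1 - D * Matrix.diagonal z)⁻¹ *ᵥ C) i‖ ^ 2
      = 1 + ∑ i, ‖z i‖ ^ 2 * ‖((1 - D * Matrix.diagonal z)⁻¹ *ᵥ C) i‖ ^ 2 := by
  set M : Matrix (Fin n) (Fin n) ℂ := 1 - D * Matrix.diagonal z with hMdef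
  set u : Fin n → ℂ := M⁻¹ *ᵥ C with hu
  have hMdet : IsUnit M.det := (Matrix.isUnit_iff_isUnit_det M).1 (isUnit_one_sub hU hz)
  have hMu : M *ᵥ u = C := by
    rw [hu, mulVec_mulVec, Matrix.mul_nonsing_inv M hMdet, one_mulVec]
  set w : Fin n → ℂ := fun i => z i * u i with hw
  have hDw : Matrix.diagonal z *ᵥ u = w := funext fun i => mulVec_diagonal z u i
  have hf : transfer A B C D z = A + B ⬝ᵥ w := by
    rw [transfer, ← hMdef, ← mulVec_mulVec, hDw]
  have hui : C + D *ᵥ w = u := by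
    have h : M *ᵥ u = u - D *ᵥ w := by
      rw [hMdef, sub_mulVec, one_mulVec, ← mulVec_mulVec, hDw]
    rw [hMu] at h
    rw [h]
    abel
  have hx := iso_real hU (Sum.elim (fun _ => (1:ℂ)) w)
  rw [blockU_mulVec] at hx
  have hxe : (Sum.elim (fun _ => A * 1 + B ⬝ᵥ w) (fun i => C i * 1 + (D *ᵥ w) i) :
      Fin 1 ⊕ Fin n → ℂ) = Sum.elim (fun _ => transfer A B C D z) u := by
    funext j
    cases j with
    | inl j => simp [hf]
    | inr i => simpa using congrFun hui i
  rw [hxe] at hx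
  simp only [Fintype.sum_sum_type, Sum.elim_inl, Sum.elim_inr, Finset.sum_const,
    Finset.card_univ, Fintype.card_fin, one_smul, norm_one, one_pow] at hx
  calc ‖transfer A B C D z‖ ^ 2 + ∑ i, ‖u i‖ ^ 2 = 1 + ∑ i, ‖w i‖ ^ 2 := hx
    _ = 1 + ∑ i, ‖z i‖ ^ 2 * ‖u i‖ ^ 2 := by
        congr 1
        exact Finset.sum_congr rfl fun i _ => by rw [hw]; simp [norm_mul, mul_pow]

end three

section four
variable {n : ℕ} {A : ℂ} {B C : Fin n → ℂ} {D : Matrix (Fin n) (Fin n) ℂ}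

lemma PXP (i : Fin n) (X : Matrix (Fin n) (Fin n) ℂ) :
    (diagonal (Pi.single i 1) : Matrix (Fin n) (Fin n) ℂ) * X * diagonal (Pi.single i 1)
      = X i i • diagonal (Pi.single i 1) := by
  ext a b
  simp only [Matrix.mul_apply, Matrix.diagonal_apply, Pi.single_apply, Matrix.smul_apply,
    smul_eq_mul]
  by_cases ha : a = i <;> by_cases hb : b = i <;>
    simp_all [Finset.sum_ite_eq, Finset.sum_ite_eq', eq_comm]

lemma hasDerivAt_line (hU : (blockU A B C D)ᴴ * blockU A B C D = 1)
    (hsym : (blockU A B C D)ᵀ = blockU A B C D)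
    {z : Fin n → ℂ} (hz : z ∈ polydisk n) (i : Fin n) :
    HasDerivAt (fun t : ℂ => transfer A B C D (z + t • (Pi.single i 1 : Fin n → ℂ)))
      ((((1 - D * Matrix.diagonal z)⁻¹ *ᵥ C) i) ^ 2) 0 := by
  classical
  set E : Matrix (Fin n) (Fin n) ℂ := Matrix.diagonal z with hE
  set M : Matrix (Fin n) (Fin n) ℂ := 1 - D * E with hM
  set N : Matrix (Fin n) (Fin n) ℂ := M⁻¹ with hN
  set u : Fin n → ℂ := N *ᵥ C with hu
  set P : Matrix (Fin n) (Fin n) ℂ := Matrix.diagonal (Pi.single i 1) with hP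
  set Q : Matrix (Fin n) (Fin n) ℂ := D * P with hQ
  set K : Matrix (Fin n) (Fin n) ℂ := N * Q with hK
  set γ : ℂ := (N * D) i i with hγ
  have hMdet : IsUnit M.det := (Matrix.isUnit_iff_isUnit_det M).1 (isUnit_one_sub hU hz)
  have hMN : M * N = 1 := Matrix.mul_nonsing_inv M hMdet
  -- symmetry data
  have hCB : C = B := by
    funext j
    have h := congrFun (congrFun hsym (Sum.inr j)) (Sum.inl 0)
    simpa [blockU, Matrix.transpose_apply, Matrix.fromBlocks] using h.symm
  have hDt : Dᵀ = D := by
    ext a b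
    have h := congrFun (congrFun hsym (Sum.inr a)) (Sum.inr b)
    simpa [blockU, Matrix.transpose_apply, Matrix.fromBlocks] using h
  have hMT : Mᵀ = 1 - E * D := by
    rw [hM, transpose_sub, transpose_one, transpose_mul, hE, Matrix.diagonal_transpose, hDt]
  have hM'det : IsUnit (1 - E * D).det := by
    rw [← hMT, Matrix.det_transpose]; exact hMdet
  set N' : Matrix (Fin n) (Fin n) ℂ := (1 - E * D)⁻¹ with hN'
  have hM'N' : (1 - E * D) * N' = 1 := Matrix.mul_nonsing_inv _ hM'det
  have hNT : Nᵀ = N' := by rw [hN, Matrix.transpose_nonsing_inv, hMT]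
  have h5 : M * D = D * (1 - E * D) := by rw [hM]; noncomm_ring
  have hNform : N = 1 + D * N' * E := by
    rw [hN]
    refine Matrix.inv_eq_right_inv ?_
    calc M * (1 + D * N' * E) = M + M * D * N' * E := by noncomm_ring
      _ = M + D * ((1 - E * D) * N') * E := by rw [h5]; noncomm_ring
      _ = M + D * E := by rw [hM'N', mul_one]
      _ = 1 := by rw [hM]; noncomm_ring
  set S : Matrix (Fin n) (Fin n) ℂ := E * N * D with hS
  have hST : Sᵀ = D * N' * E := by
    rw [hS, transpose_mul, transpose_mul, hNT, hDt, hE, Matrix.diagonal_transpose, ← hE,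
      mul_assoc]
  have hvec : B + B ᵥ* S = u := by
    rw [← Matrix.mulVec_transpose, hST, hu, hCB, hNform, add_mulVec, one_mulVec]
  -- algebraic preliminaries for the perturbed inverse
  have hPK : P * K = γ • P := by
    calc P * K = P * (N * D) * P := by rw [hK, hQ]; noncomm_ring
      _ = γ • P := by rw [PXP, hγ]
  have hQK : Q * K = γ • Q := by
    calc Q * K = D * (P * (N * D) * P) := by rw [hK, hQ]; noncomm_ring
      _ = D * (γ • P) := by rw [PXP, hγ]
      _ = γ • Q := by rw [mul_smul_comm, hQ]
  have hMK : M * K = Q := by rw [hK, ← mul_assoc, hMN, one_mul]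
  set a0 : ℂ := B ⬝ᵥ ((E * N) *ᵥ C) with ha0
  set a1 : ℂ := B ⬝ᵥ ((E * (K * N)) *ᵥ C) with ha1
  set a2 : ℂ := B ⬝ᵥ ((P * N) *ᵥ C) with ha2
  set a3 : ℂ := B ⬝ᵥ ((P * (K * N)) *ᵥ C) with ha3
  -- local formula
  have hloc : ∀ t : ℂ, 1 - t * γ ≠ 0 →
      transfer A B C D (z + t • (Pi.single i 1 : Fin n → ℂ)) =
        A + a0 + t * a2 + t * ((1 - t * γ)⁻¹ * (a1 + t * a3)) := by
    intro t ht
    set c : ℂ := t / (1 - t * γ) with hc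
    have hcoeff : c - t - t * (c * γ) = 0 := by
      rw [hc]; field_simp; ring
    have hWinv : (M - t • Q) * ((1 + c • K) * N) = 1 := by
      have e1 : (M - t • Q) * (1 + c • K) = M + c • Q - (t • Q + t • (c • (γ • Q))) := by
        rw [sub_mul, mul_add, mul_add, mul_one, mul_one, mul_smul_comm, hMK,
          smul_mul_assoc, mul_smul_comm, hQK]
      have e2 : M + c • Q - (t • Q + t • (c • (γ • Q))) =
          M + (c - t - t * (c * γ)) • Q := by module
      rw [← mul_assoc, e1, e2, hcoeff, zero_smul, add_zero, hMN]
    have hdiagadd : Matrix.diagonal (z + t • (Pi.single i 1 : Fin n → ℂ)) = E + t • P := by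
      rw [hE, hP]
      ext a b
      by_cases h : a = b <;> simp [Matrix.diagonal_apply, h]
    have hone : 1 - D * (E + t • P) = M - t • Q := by
      rw [mul_add, mul_smul_comm, hM, hQ]; module
    have hWeq : (M - t • Q)⁻¹ = (1 + c • K) * N := Matrix.inv_eq_right_inv hWinv
    have hexp : (E + t • P) * ((1 + c • K) * N) =
        E * N + c • (E * (K * N)) + t • (P * N) + t • (c • (P * (K * N))) := by
      have hR : (1 + c • K) * N = N + c • (K * N) := by
        rw [add_mul, one_mul, smul_mul_assoc]
      rw [hR]
      simp only [add_mul, mul_add, smul_mul_assoc, mul_smul_comm]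
      module
    rw [transfer, hdiagadd, hone, hWeq, hexp]
    simp only [add_mulVec, smul_mulVec, dotProduct_add, dotProduct_smul, smul_eq_mul]
    rw [← ha0, ← ha1, ← ha2, ← ha3, hc]
    field_simp
    ring
  -- derivative of the local model
  have hlin : HasDerivAt (fun t : ℂ => 1 - t * γ) (-γ) 0 := by
    simpa using ((hasDerivAt_id (0 : ℂ)).mul_const γ).const_sub 1
  have hinv : HasDerivAt (fun t : ℂ => (1 - t * γ)⁻¹) γ 0 := by
    have h := hlin.fun_inv (by simp)
    simpa using h
  have h13 : HasDerivAt (fun t : ℂ => a1 + t * a3) a3 0 := by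
    simpa using ((hasDerivAt_id (0 : ℂ)).mul_const a3).const_add a1
  have hqd := hinv.fun_mul h13
  have hmain := (hasDerivAt_id (0 : ℂ)).fun_mul hqd
  have ht2 := (hasDerivAt_id (0 : ℂ)).mul_const a2
  have hsum := ((ht2.const_add (A + a0)).fun_add hmain)
  have hg : HasDerivAt (fun t : ℂ =>
      A + a0 + t * a2 + t * ((1 - t * γ)⁻¹ * (a1 + t * a3))) (a2 + a1) 0 := by
    exact hsum.congr_deriv (by simp)
  -- transfer along the line agrees with the local model near 0
  have hopen : ∀ᶠ t in nhds (0 : ℂ), 1 - t * γ ≠ 0 := by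
    have hcont : Continuous fun t : ℂ => 1 - t * γ :=
      continuous_const.sub (continuous_id.mul continuous_const)
    have htend : Filter.Tendsto (fun t : ℂ => 1 - t * γ) (nhds 0) (nhds 1) := by
      simpa using hcont.tendsto 0
    exact htend.eventually_ne one_ne_zero
  have heq : (fun t : ℂ => transfer A B C D (z + t • (Pi.single i 1 : Fin n → ℂ))) =ᶠ[nhds 0]
      (fun t : ℂ => A + a0 + t * a2 + t * ((1 - t * γ)⁻¹ * (a1 + t * a3))) :=
    hopen.mono fun t ht => hloc t ht
  have hfinal := hg.congr_of_eventuallyEq heq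
  -- identify the derivative value
  have hPu : P *ᵥ u = Pi.single i (u i) := by
    funext k
    rw [hP, mulVec_diagonal]
    by_cases h : k = i
    · subst h; simp
    · simp [Pi.single_eq_of_ne h, Pi.single_eq_of_ne (Ne.symm h)]
  have ha2v : a2 = B i * u i := by
    rw [ha2, ← mulVec_mulVec, ← hu, hPu, dotProduct_single]
  have ha1v : a1 = (B ᵥ* S) i * u i := by
    have hsingle : (Pi.single i (u i) : Fin n → ℂ) = u i • (Pi.single i 1 : Fin n → ℂ) := by
      funext k
      by_cases h : k = i
      · subst h; simp
      · simp [Pi.single_eq_of_ne h]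
    rw [ha1, ← mulVec_mulVec, ← mulVec_mulVec, ← hu, hK, hQ, ← mulVec_mulVec, ← mulVec_mulVec,
      hPu, hsingle, mulVec_smul, mulVec_smul, mulVec_smul, dotProduct_smul]
    rw [mulVec_mulVec, mulVec_mulVec, ← hS]
    rw [dotProduct_mulVec, dotProduct_single]
    rw [smul_eq_mul]
    ring
  have hval : a2 + a1 = u i ^ 2 := by
    have hv := congrFun hvec i
    simp only [Pi.add_apply] at hv
    rw [ha2v, ha1v]
    linear_combination u i * hv
  rw [← hval]
  exact hfinal

lemma diffAt_prod {x : Fin n → ℂ} (s : Finset (Fin n)) (f : Fin n → (Fin n → ℂ) → ℂ)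
    (h : ∀ j, DifferentiableAt ℂ (f j) x) :
    DifferentiableAt ℂ (fun z => ∏ j ∈ s, f j z) x := by
  classical
  induction s using Finset.induction with
  | empty => simpa using differentiableAt_const (1:ℂ)
  | insert a s hj ih =>
      simp only [Finset.prod_insert hj]
      exact (h _).mul ih

lemma differentiableAt_det {x : Fin n → ℂ} (G : (Fin n → ℂ) → Matrix (Fin n) (Fin n) ℂ)
    (hG : ∀ a b, DifferentiableAt ℂ (fun z => G z a b) x) :
    DifferentiableAt ℂ (fun z => (G z).det) x := by
  simp only [Matrix.det_apply']
  exact DifferentiableAt.fun_sum fun σ _ =>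
    ((diffAt_prod Finset.univ (fun j z => G z (σ j) j) fun j => hG _ _).const_mul _)

lemma differentiableAt_entry {x : Fin n → ℂ} (a b : Fin n) :
    DifferentiableAt ℂ (fun z : Fin n → ℂ => (1 - D * Matrix.diagonal z) a b) x := by
  simp only [Matrix.sub_apply, Matrix.mul_diagonal, Matrix.one_apply]
  exact (differentiableAt_const _).sub
    ((ContinuousLinearMap.proj b : (Fin n → ℂ) →L[ℂ] ℂ).differentiableAt.const_mul _)

lemma differentiableAt_transfer (hU : (blockU A B C D)ᴴ * blockU A B C D = 1)
    {z : Fin n → ℂ} (hz : z ∈ polydisk n) :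
    DifferentiableAt ℂ (transfer A B C D) z := by
  have hform : transfer A B C D = fun z =>
      A + ((1 - D * Matrix.diagonal z).det)⁻¹ *
        (B ⬝ᵥ ((Matrix.diagonal z * (1 - D * Matrix.diagonal z).adjugate) *ᵥ C)) := by
    funext y
    rw [transfer, Matrix.inv_def, Ring.inverse_eq_inv', mul_smul_comm, smul_mulVec,
      dotProduct_smul, smul_eq_mul]
  rw [hform]
  have hdet : ∀ {x : Fin n → ℂ}, DifferentiableAt ℂ
      (fun y => (1 - D * Matrix.diagonal y).det) x :=
    fun {x} => differentiableAt_det _ (fun a b => differentiableAt_entry a b)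
  have hdetne : (1 - D * Matrix.diagonal z).det ≠ 0 := by
    have := (Matrix.isUnit_iff_isUnit_det _).1 (isUnit_one_sub hU hz)
    exact this.ne_zero
  have hadj : ∀ (a b : Fin n), DifferentiableAt ℂ
      (fun y => (1 - D * Matrix.diagonal y).adjugate a b) z := by
    intro a b
    simp only [Matrix.adjugate_apply]
    refine differentiableAt_det _ (fun a' b' => ?_)
    rcases eq_or_ne a' b with h | h
    · simp only [Matrix.updateRow_apply, h, if_pos rfl]
      exact differentiableAt_const _
    · simp only [Matrix.updateRow_apply, if_neg h]
      exact differentiableAt_entry a' b'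
  have hnum : DifferentiableAt ℂ
      (fun y => B ⬝ᵥ ((Matrix.diagonal y * (1 - D * Matrix.diagonal y).adjugate) *ᵥ C)) z := by
    simp only [dotProduct, mulVec, Matrix.diagonal_mul]
    refine DifferentiableAt.fun_sum fun k _ => DifferentiableAt.const_mul ?_ _
    refine DifferentiableAt.fun_sum fun l _ => DifferentiableAt.mul_const ?_ _
    exact ((ContinuousLinearMap.proj k : (Fin n → ℂ) →L[ℂ] ℂ).differentiableAt).mul (hadj k l)
  exact (differentiableAt_const A).add ((hdet.inv hdetne).mul hnum)

end four

/-- If `U = [[A,B],[C,D]]` is a symmetric unitary, then the transfer function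
`f(z) = A + B E_z (I - D E_z)⁻¹ C` is a well-defined holomorphic function on the polydisk
with values in the closed unit disk, and `∑ i (1-|zᵢ|²)|∂f/∂zᵢ(z)| = 1 - |f z|²` everywhere. -/
theorem symmetric_unitary_transfer_is_extremal (n : ℕ) (hn : 0 < n)
    (A : ℂ) (B C : Fin n → ℂ) (D : Matrix (Fin n) (Fin n) ℂ)
    (hU : (blockU A B C D)ᴴ * blockU A B C D = 1)
    (hsym : (blockU A B C D)ᵀ = blockU A B C D) :
    (∀ z ∈ polydisk n, IsUnit (1 - D * Matrix.diagonal z)) ∧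
    DifferentiableOn ℂ (transfer A B C D) (polydisk n) ∧
    (∀ z ∈ polydisk n, ‖transfer A B C D z‖ ≤ 1) ∧
    (∀ z ∈ polydisk n,
      ∑ i, (1 - ‖z i‖ ^ 2) * ‖fderiv ℂ (transfer A B C D) z (Pi.single i 1)‖ =
        1 - ‖transfer A B C D z‖ ^ 2) := by
  have key : ∀ z ∈ polydisk n,
      1 - ‖transfer A B C D z‖ ^ 2 =
        ∑ i, (1 - ‖z i‖ ^ 2) * ‖((1 - D * Matrix.diagonal z)⁻¹ *ᵥ C) i‖ ^ 2 := by
    intro z hz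
    have h := main_identity hU hz
    have hsplit : ∑ i, (1 - ‖z i‖ ^ 2) * ‖((1 - D * Matrix.diagonal z)⁻¹ *ᵥ C) i‖ ^ 2 =
        ∑ i, ‖((1 - D * Matrix.diagonal z)⁻¹ *ᵥ C) i‖ ^ 2
          - ∑ i, ‖z i‖ ^ 2 * ‖((1 - D * Matrix.diagonal z)⁻¹ *ᵥ C) i‖ ^ 2 := by
      rw [← Finset.sum_sub_distrib]
      exact Finset.sum_congr rfl fun i _ => by ring
    rw [hsplit]
    linarith
  refine ⟨fun z hz => isUnit_one_sub hU hz,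
    fun z hz => (differentiableAt_transfer hU hz).differentiableWithinAt, ?_, ?_⟩
  · intro z hz
    have h := key z hz
    have hnn : 0 ≤ ∑ i, (1 - ‖z i‖ ^ 2) * ‖((1 - D * Matrix.diagonal z)⁻¹ *ᵥ C) i‖ ^ 2 :=
      Finset.sum_nonneg fun i _ =>
        mul_nonneg (by nlinarith [sq_norm_lt_one hz i]) (by positivity)
    nlinarith [norm_nonneg (transfer A B C D z)]
  · intro z hz
    have hdiff := differentiableAt_transfer hU hz
    have hfd : ∀ i, fderiv ℂ (transfer A B C D) z (Pi.single i 1) =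
        (((1 - D * Matrix.diagonal z)⁻¹ *ᵥ C) i) ^ 2 := by
      intro i
      have hline : HasDerivAt (fun t : ℂ => z + t • (Pi.single i 1 : Fin n → ℂ))
          (Pi.single i 1) 0 := by
        simpa using ((hasDerivAt_id (0 : ℂ)).smul_const (Pi.single i 1 : Fin n → ℂ)).const_add z
      have h0 : z + (0 : ℂ) • (Pi.single i 1 : Fin n → ℂ) = z := by simp
      have hF : HasFDerivAt (transfer A B C D) (fderiv ℂ (transfer A B C D) z)
          (z + (0 : ℂ) • (Pi.single i 1 : Fin n → ℂ)) := by
        rw [h0]; exact hdiff.hasFDerivAt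
      have hcomp := hF.comp_hasDerivAt 0 hline
      exact ((hasDerivAt_line hU hsym hz i).unique hcomp).symm
    rw [key z hz]
    refine Finset.sum_congr rfl fun i _ => ?_
    rw [hfd i, norm_pow]
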